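/- arXiv:2602.06649 — 5 statements merged into one kernel-verified Lean document; each statement's English description precedes it below -/
import Mathlib

section
/- For any λ > 0, the probability that no individuals survive a uniform catastrophe, namely (1/(λ+1)) · Σ_{j=0}^∞ (1/(j+1)) · (λ/(λ+1))^j, equals ln(λ+1)/λ. -/
open Real

/-- The probability that no individuals survive a uniform catastrophe equals
`ln(λ+1)/λ`. -/
theorem prob_no_survivors (l : ℝ) (hl : 0 < l) :
    (1/(l+1)) * ∑' j : ℕ, (1 / ((j:ℝ) + 1)) * (l/(l+1))^j = Real.log (l+1) / l := by
  have hl1 : (0:ℝ) < l + 1 := by linarith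
  set x : ℝ := l / (l + 1) with hx
  have hx0 : 0 < x := div_pos hl hl1
  have hx1 : x < 1 := (div_lt_one hl1).mpr (by linarith)
  have habs : |x| < 1 := by rw [abs_of_pos hx0]; exact hx1
  have hs := (hasSum_pow_div_log_of_abs_lt_one habs).mul_left (1 / x)
  have heq : (fun n : ℕ => 1 / x * (x ^ (n + 1) / (n + 1))) =
      fun n : ℕ => (1 / ((n:ℝ) + 1)) * x ^ n := by
    funext n
    field_simp
    ring
  rw [heq] at hs
  rw [hs.tsum_eq]
  have h1x : 1 - x = 1 / (l + 1) := by rw [hx]; field_simp; ring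
  rw [h1x, one_div, Real.log_inv, neg_neg, hx, one_div_div]
  field_simp
end

section
/- For 0 < x < 1, 0 ≤ s < 1, the double sum Σ_{n=1}^∞ (sx)^n ∫₀^∞ e^{-(n+1)t}/(1 - x e^{-t}) dt equals (s·ln(1-x) − ln(1-sx)) / ((s-1)x). -/
open MeasureTheory Real Set Filter

lemma aux_meas {c : ℝ} (hc0 : 0 ≤ c) (hc1 : c < 1) :
    ContinuousOn (fun t => c * Real.exp (-t) / (1 - c * Real.exp (-t))) (Set.Ici 0) := by
  apply ContinuousOn.div
  · fun_prop
  · fun_prop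
  · intro t ht
    have h1 : Real.exp (-t) ≤ 1 := Real.exp_le_one_iff.2 (by simpa using ht)
    nlinarith [Real.exp_pos (-t)]

lemma aux_int {c : ℝ} (hc0 : 0 ≤ c) (hc1 : c < 1) :
    IntegrableOn (fun t => c * Real.exp (-t) / (1 - c * Real.exp (-t))) (Set.Ioi 0) := by
  apply Integrable.mono' (g := fun t => c / (1 - c) * Real.exp (-t))
  · have := (exp_neg_integrableOn_Ioi 0 (b := 1) one_pos).const_mul (c / (1 - c))
    simpa using this
  · exact ((aux_meas hc0 hc1).mono Ioi_subset_Ici_self).aestronglyMeasurable measurableSet_Ioi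
  · filter_upwards [ae_restrict_mem measurableSet_Ioi] with t ht
    have ht' : (0:ℝ) ≤ t := le_of_lt ht
    have h1 : Real.exp (-t) ≤ 1 := Real.exp_le_one_iff.2 (by simpa using ht')
    have hep : 0 < Real.exp (-t) := Real.exp_pos _
    have hden : 0 < 1 - c * Real.exp (-t) := by nlinarith
    have hnum : 0 ≤ c * Real.exp (-t) := by positivity
    rw [Real.norm_of_nonneg (by positivity), div_mul_eq_mul_div]
    exact div_le_div₀ hnum le_rfl (by linarith) (by nlinarith)

lemma aux_val {c : ℝ} (hc0 : 0 ≤ c) (hc1 : c < 1) :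
    ∫ t in Set.Ioi (0:ℝ), c * Real.exp (-t) / (1 - c * Real.exp (-t))
      = - Real.log (1 - c) := by
  have key : ∫ t in Set.Ioi (0:ℝ), c * Real.exp (-t) / (1 - c * Real.exp (-t)) = 0 -
      Real.log (1 - c * Real.exp (-(0:ℝ))) := by
    apply integral_Ioi_of_hasDerivAt_of_tendsto'
      (f := fun t => Real.log (1 - c * Real.exp (-t)))
    · intro t ht
      have h1 : Real.exp (-t) ≤ 1 := Real.exp_le_one_iff.2 (by simpa using ht.out)
      have hden : 0 < 1 - c * Real.exp (-t) := by nlinarith [Real.exp_pos (-t)]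
      have h2 : HasDerivAt (fun t : ℝ => 1 - c * Real.exp (-t)) (c * Real.exp (-t)) t := by
        have := ((hasDerivAt_id t).neg.exp.const_mul c).const_sub 1
        exact this.congr_deriv (by simp)
      simpa using h2.log hden.ne'
    · exact aux_int hc0 hc1
    · have h1 : Tendsto (fun t : ℝ => 1 - c * Real.exp (-t)) atTop (nhds 1) := by
        have := (Real.tendsto_exp_neg_atTop_nhds_zero.const_mul c).const_sub 1
        simpa using this
      have := ((Real.continuousAt_log one_ne_zero).tendsto.comp h1)
      simpa [Function.comp_def] using this
  simpa using key

/-- Series-integral identity used to compute the pgf of the survivor count: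
`Σ_{n≥1} (sx)^n ∫₀^∞ e^{-(n+1)t}/(1-x e^{-t}) dt
  = (s ln(1-x) - ln(1-sx))/((s-1)x)`. -/
theorem lerch_series_identity (x s : ℝ) (hx0 : 0 < x) (hx1 : x < 1)
    (hs0 : 0 ≤ s) (hs1 : s < 1) :
    (∑' n : ℕ, (s*x)^(n+1) *
        ∫ t in Set.Ioi (0:ℝ), Real.exp (-(((n:ℝ)+2)*t)) / (1 - x * Real.exp (-t)))
      = (s * Real.log (1-x) - Real.log (1 - s*x)) / ((s-1)*x) := by
  have hq0 : 0 ≤ s * x := by positivity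
  have hq1 : s * x < 1 := by nlinarith
  set F : ℕ → ℝ → ℝ := fun n t => (s*x)^(n+1) *
      (Real.exp (-(((n:ℝ)+2)*t)) / (1 - x * Real.exp (-t))) with hF
  -- basic positivity facts on Ioi 0
  have hfacts : ∀ t : ℝ, 0 < t → Real.exp (-t) < 1 ∧ 0 < 1 - x * Real.exp (-t)
      ∧ 0 < 1 - s * x * Real.exp (-t) := by
    intro t ht
    have h1 : Real.exp (-t) < 1 := Real.exp_lt_one_iff.2 (by linarith)
    have hep : 0 < Real.exp (-t) := Real.exp_pos _
    refine ⟨h1, by nlinarith, by nlinarith⟩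
  -- integrability of each F n
  have hFint : ∀ n : ℕ, IntegrableOn (F n) (Set.Ioi 0) := by
    intro n
    apply Integrable.mono' (g := fun t => (s*x)^(n+1) / (1 - x) * Real.exp (-t))
    · have := (exp_neg_integrableOn_Ioi 0 (b := 1) one_pos).const_mul ((s*x)^(n+1) / (1 - x))
      simpa using this
    · apply ContinuousOn.aestronglyMeasurable _ measurableSet_Ioi
      apply ContinuousOn.mul continuousOn_const
      apply ContinuousOn.div
      · fun_prop
      · fun_prop
      · intro t ht
        exact (hfacts t ht).2.1.ne'
    · filter_upwards [ae_restrict_mem measurableSet_Ioi] with t ht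
      obtain ⟨h1, h2, h3⟩ := hfacts t ht
      have hep : 0 < Real.exp (-t) := Real.exp_pos _
      have hle : Real.exp (-(((n:ℝ)+2)*t)) ≤ Real.exp (-t) := by
        apply Real.exp_le_exp.2
        have h0 : (0:ℝ) < t := ht
        nlinarith [mul_nonneg (Nat.cast_nonneg n : (0:ℝ) ≤ n) h0.le]
      rw [Real.norm_of_nonneg (by positivity), div_mul_eq_mul_div, mul_div_assoc]
      apply mul_le_mul_of_nonneg_left _ (by positivity)
      exact div_le_div₀ (le_of_lt hep) hle (by linarith) (by nlinarith)
  -- summability of integrals of norms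
  have hFsum : Summable fun n => ∫ t in Set.Ioi (0:ℝ), ‖F n t‖ := by
    set C : ℝ := ∫ t in Set.Ioi (0:ℝ), Real.exp (-t) / (1 - x) with hC
    have hbound : ∀ n : ℕ, (∫ t in Set.Ioi (0:ℝ), ‖F n t‖) ≤ (s*x)^(n+1) * C := by
      intro n
      have : (s*x)^(n+1) * C = ∫ t in Set.Ioi (0:ℝ), (s*x)^(n+1) * (Real.exp (-t) / (1 - x)) := by
        rw [integral_const_mul]
      rw [this]
      apply integral_mono_of_nonneg
      · filter_upwards with t using norm_nonneg _
      · apply Integrable.const_mul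
        apply Integrable.div_const
        have := exp_neg_integrableOn_Ioi 0 (b := 1) one_pos
        simpa [IntegrableOn] using this
      · filter_upwards [ae_restrict_mem measurableSet_Ioi] with t ht
        obtain ⟨h1, h2, h3⟩ := hfacts t ht
        have hle : Real.exp (-(((n:ℝ)+2)*t)) ≤ Real.exp (-t) := by
          apply Real.exp_le_exp.2
          have h0 : (0:ℝ) < t := ht
          nlinarith [mul_nonneg (Nat.cast_nonneg n : (0:ℝ) ≤ n) h0.le]
        rw [Real.norm_of_nonneg (by positivity)]
        apply mul_le_mul_of_nonneg_left _ (by positivity)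
        exact div_le_div₀ (le_of_lt (Real.exp_pos _)) hle (by linarith) (by nlinarith)
    apply Summable.of_nonneg_of_le
      (fun n => integral_nonneg (fun t => norm_nonneg _)) hbound
    exact (((summable_geometric_of_lt_one hq0 hq1).mul_right C).mul_left (s*x)).congr
      (fun n => by ring)
  -- swap sum and integral
  have hswap : (∑' n : ℕ, ∫ t in Set.Ioi (0:ℝ), F n t)
      = ∫ t in Set.Ioi (0:ℝ), ∑' n : ℕ, F n t :=
    integral_tsum_of_summable_integral_norm hFint hFsum
  have hLHS : (∑' n : ℕ, (s*x)^(n+1) *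
      ∫ t in Set.Ioi (0:ℝ), Real.exp (-(((n:ℝ)+2)*t)) / (1 - x * Real.exp (-t)))
      = ∑' n : ℕ, ∫ t in Set.Ioi (0:ℝ), F n t := by
    apply tsum_congr
    intro n
    rw [hF]
    simp only
    rw [integral_const_mul]
  rw [hLHS, hswap]
  -- pointwise evaluation of the inner sum
  have hpt : ∀ t ∈ Set.Ioi (0:ℝ), (∑' n : ℕ, F n t)
      = (s/((1-s)*x)) * (x * Real.exp (-t) / (1 - x * Real.exp (-t)))
        - (1/((1-s)*x)) * (s * x * Real.exp (-t) / (1 - s * x * Real.exp (-t))) := by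
    intro t ht
    obtain ⟨h1, h2, h3⟩ := hfacts t ht
    have hep : 0 < Real.exp (-t) := Real.exp_pos _
    set u : ℝ := Real.exp (-t) with hu
    have hr0 : 0 ≤ s * x * u := by positivity
    have hr1 : s * x * u < 1 := by nlinarith
    have hpow : ∀ n : ℕ, F n t = (u / (1 - x * u)) * (s*x*u)^(n+1) := by
      intro n
      rw [hF]
      simp only
      have : Real.exp (-(((n:ℝ)+2)*t)) = u^(n+1) * u := by
        rw [hu, ← Real.exp_nat_mul, ← Real.exp_add]
        congr 1
        push_cast
        ring
      rw [this, ← hu]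
      field_simp
      ring
    rw [tsum_congr hpow, tsum_mul_left]
    have hgeo : (∑' n : ℕ, (s*x*u)^(n+1)) = (s*x*u) * (1 - s*x*u)⁻¹ := by
      have : ∀ n : ℕ, (s*x*u)^(n+1) = (s*x*u) * (s*x*u)^n := fun n => by ring
      rw [tsum_congr this, tsum_mul_left, tsum_geometric_of_lt_one hr0 hr1]
    rw [hgeo]
    have hs' : (0:ℝ) < 1 - s := by linarith
    have hs1' : 1 - s ≠ 0 := hs'.ne'
    have h2' : 1 - u * x ≠ 0 := by rw [mul_comm]; exact h2.ne'
    have h3' : 1 - u * x * s ≠ 0 := by convert h3.ne' using 2; ring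
    field_simp
    ring
  rw [setIntegral_congr_fun measurableSet_Ioi hpt]
  -- split the integral and evaluate
  have hint1 := aux_int (le_of_lt hx0) hx1
  have hint2 := aux_int hq0 hq1
  have hval1 := aux_val (le_of_lt hx0) hx1
  have hval2 := aux_val hq0 hq1
  rw [integral_sub ((hint1.const_mul _)) ((hint2.const_mul _)),
    integral_const_mul, integral_const_mul]
  have e1 : (∫ t in Set.Ioi (0:ℝ), x * Real.exp (-t) / (1 - x * Real.exp (-t)))
      = - Real.log (1 - x) := hval1
  have e2 : (∫ t in Set.Ioi (0:ℝ), s * x * Real.exp (-t) / (1 - s * x * Real.exp (-t)))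
      = - Real.log (1 - s * x) := by
    have := hval2
    simpa [mul_assoc] using this
  rw [e1, e2]
  have hs' : (1:ℝ) - s ≠ 0 := by linarith
  have hs'' : s - 1 ≠ 0 := by intro h; apply hs'; linarith
  field_simp
  ring
end

section
/- Let N be the number of survivors of a uniform catastrophe, with P(N=n) = (1/(λ+1))(λ/(λ+1))^n Σ_{j=0}^∞ (λ/(λ+1))^j/(j+n+1) for λ > 0. Then for all s with 0 ≤ s < 1, E[s^N] = ln(1 + λ(1-s)) / (λ(1-s)). -/
open Real

/-- The probability generating function of the number `N` of survivors of a
uniform catastrophe: `E[s^N] = ln(1+λ(1-s))/(λ(1-s))`. -/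
theorem pgf_survivors (l : ℝ) (hl : 0 < l)
    (P : ℕ → ℝ)
    (hP : ∀ n : ℕ, P n = (1/(l+1)) * (l/(l+1))^n *
        ∑' j : ℕ, (l/(l+1))^j / ((j:ℝ) + n + 1)) :
    ∀ s : ℝ, 0 ≤ s → s < 1 →
      ∑' n : ℕ, s^n * P n = Real.log (1 + l*(1-s)) / (l*(1-s)) := by
  intro s hs0 hs1
  have hl1 : (0:ℝ) < l + 1 := by linarith
  set r : ℝ := l / (l + 1) with hrdef
  clear_value r
  have hr0 : 0 < r := hrdef ▸ div_pos hl hl1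
  have hr1 : r < 1 := hrdef ▸ (div_lt_one hl1).mpr (by linarith)
  have hq0 : 0 ≤ s * r := mul_nonneg hs0 hr0.le
  have hq1 : s * r < 1 := by nlinarith
  set f : ℕ × ℕ → ℝ := fun p => (s*r)^p.1 * r^p.2 / ((p.1 : ℝ) + p.2 + 1) with hfdef
  -- summability of the double series
  have hg : Summable (fun p : ℕ × ℕ => (s*r)^p.1 * r^p.2) :=
    (summable_geometric_of_lt_one hq0 hq1).mul_of_nonneg
      (summable_geometric_of_lt_one hr0.le hr1) (fun n => pow_nonneg hq0 n)
      (fun n => pow_nonneg hr0.le n)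
  have hfnn : ∀ p : ℕ × ℕ, 0 ≤ f p := by
    intro p
    show 0 ≤ (s*r)^p.1 * r^p.2 / ((p.1 : ℝ) + p.2 + 1)
    have h1 : (0:ℝ) ≤ (p.1:ℝ) + p.2 + 1 := by positivity
    exact div_nonneg (mul_nonneg (pow_nonneg hq0 _) (pow_nonneg hr0.le _)) h1
  have hfle : ∀ p : ℕ × ℕ, f p ≤ (s*r)^p.1 * r^p.2 := by
    intro p
    apply div_le_self (mul_nonneg (pow_nonneg hq0 _) (pow_nonneg hr0.le _))
    have h1 : (0:ℝ) ≤ (p.1:ℝ) + p.2 := by positivity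
    linarith
  have hf : Summable f := Summable.of_nonneg_of_le hfnn hfle hg
  -- rewrite each term
  have hstep1 : ∀ n : ℕ, s^n * P n = (1/(l+1)) * ∑' j : ℕ, f (n, j) := by
    intro n
    rw [hP n]
    have hterm : ∀ j : ℕ, f (n, j) = (s^n * r^n) * (r^j / ((j:ℝ) + n + 1)) := by
      intro j
      have hd : ((n:ℝ) + j + 1) = ((j:ℝ) + n + 1) := by ring
      simp only [hfdef, mul_pow, hd, mul_div_assoc]
    rw [tsum_congr hterm, tsum_mul_left]
    ring
  -- the diagonal sum over antidiagonals
  have e := Finset.HasAntidiagonal.sigmaAntidiagonalEquivProd (A := ℕ)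
  have hfs : Summable (f ∘ (Finset.HasAntidiagonal.sigmaAntidiagonalEquivProd (A := ℕ))) :=
    (Equiv.summable_iff _).mpr hf
  have hdiag : ∑' p : ℕ × ℕ, f p
      = ∑' m : ℕ, ∑ p ∈ Finset.HasAntidiagonal.antidiagonal m, f p := by
    calc ∑' p : ℕ × ℕ, f p
        = ∑' σ : (Σ m : ℕ, {x // x ∈ Finset.HasAntidiagonal.antidiagonal m}),
            (f ∘ (Finset.HasAntidiagonal.sigmaAntidiagonalEquivProd (A := ℕ))) σ :=
          ((Finset.HasAntidiagonal.sigmaAntidiagonalEquivProd (A := ℕ)).tsum_eq f).symm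
      _ = ∑' (m : ℕ) (c : {x // x ∈ Finset.HasAntidiagonal.antidiagonal m}),
            (f ∘ (Finset.HasAntidiagonal.sigmaAntidiagonalEquivProd (A := ℕ))) ⟨m, c⟩ :=
          Summable.tsum_sigma' (fun m => Summable.of_finite) hfs
      _ = ∑' m : ℕ, ∑ p ∈ Finset.HasAntidiagonal.antidiagonal m, f p := by
          refine tsum_congr fun m => ?_
          simp only [Function.comp, Finset.HasAntidiagonal.sigmaAntidiagonalEquivProd_apply]
          exact Finset.tsum_subtype _ _
  -- compute the antidiagonal sums
  have hs1' : s - 1 ≠ 0 := by intro h; nlinarith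
  have hanti : ∀ m : ℕ, ∑ p ∈ Finset.HasAntidiagonal.antidiagonal m, f p
      = (1/(1-s)) * (1/r) * (r^(m+1)/((m:ℝ)+1) - (s*r)^(m+1)/((m:ℝ)+1)) := by
    intro m
    rw [Finset.Nat.sum_antidiagonal_eq_sum_range_succ_mk]
    have hterm : ∀ k ∈ Finset.range (m+1), f (k, m-k) = r^m/((m:ℝ)+1) * s^k := by
      intro k hk
      have hk' : k ≤ m := Nat.lt_succ_iff.mp (Finset.mem_range.mp hk)
      have hc : (((m - k : ℕ)) : ℝ) = (m:ℝ) - k := Nat.cast_sub hk'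
      have hpow : r^k * r^(m-k) = r^m := by
        rw [← pow_add, Nat.add_sub_cancel' hk']
      simp only [hfdef]
      rw [hc]
      have hd : ((k:ℝ) + ((m:ℝ) - k) + 1) = (m:ℝ) + 1 := by ring
      rw [hd, mul_pow, mul_assoc, hpow]
      ring
    rw [Finset.sum_congr rfl hterm, ← Finset.mul_sum, geom_sum_eq (by intro h; exact hs1' (by rw [h]; ring)) (m+1)]
    have hm1 : ((m:ℝ) + 1) ≠ 0 := by positivity
    have hrne : r ≠ 0 := hr0.ne'
    have h1s : (1:ℝ) - s ≠ 0 := by linarith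
    rw [mul_pow]
    field_simp
    ring
  -- the log series
  have h1 : HasSum (fun m : ℕ => r^(m+1)/((m:ℝ)+1)) (-Real.log (1-r)) := by
    have := hasSum_pow_div_log_of_abs_lt_one (x := r) (by rw [abs_of_pos hr0]; exact hr1)
    simpa using this
  have h2 : HasSum (fun m : ℕ => (s*r)^(m+1)/((m:ℝ)+1)) (-Real.log (1-s*r)) := by
    have := hasSum_pow_div_log_of_abs_lt_one (x := s*r) (by rw [abs_of_nonneg hq0]; exact hq1)
    simpa using this
  have hsum : HasSum (fun m : ℕ => (1/(1-s)) * (1/r) * (r^(m+1)/((m:ℝ)+1) - (s*r)^(m+1)/((m:ℝ)+1)))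
      ((1/(1-s)) * (1/r) * (Real.log (1-s*r) - Real.log (1-r))) := by
    have := (h1.sub h2).mul_left ((1/(1-s)) * (1/r))
    convert this using 2
    · rfl
    ring
  -- put everything together
  have hinner : ∀ n : ℕ, Summable fun j => f (n, j) := fun n => hf.prod_factor n
  calc ∑' n : ℕ, s^n * P n
      = ∑' n : ℕ, (1/(l+1)) * ∑' j : ℕ, f (n, j) := tsum_congr hstep1
    _ = (1/(l+1)) * ∑' n : ℕ, ∑' j : ℕ, f (n, j) := tsum_mul_left
    _ = (1/(l+1)) * ∑' p : ℕ × ℕ, f p := by rw [Summable.tsum_prod' hf hinner]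
    _ = (1/(l+1)) * ((1/(1-s)) * (1/r) * (Real.log (1-s*r) - Real.log (1-r))) := by
        rw [hdiag, tsum_congr hanti, hsum.tsum_eq]
    _ = Real.log (1 + l*(1-s)) / (l*(1-s)) := by
        have hsr : (0:ℝ) < 1 - s*r := by linarith
        have hrr : (0:ℝ) < 1 - r := by linarith
        have hlog : Real.log (1-s*r) - Real.log (1-r) = Real.log (1 + l*(1-s)) := by
          rw [← Real.log_div hsr.ne' hrr.ne']
          congr 1
          rw [hrdef]
          field_simp
          ring
        rw [hlog]
        have h1s : (1:ℝ) - s ≠ 0 := by linarith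
        set L := Real.log (1 + l*(1-s)) with hL
        rw [hrdef]
        field_simp
end

section
/- The critical values λ_d defined as the unique positive root of λ = (d²/(d−1))·ln((λ+d)/d) form a sequence converging to 2 as d → ∞. -/
open Real Filter

/-- Padé lower bound: `2x/(2+x) ≤ log(1+x)` for `x ≥ 0`. -/
lemma log_low {x : ℝ} (hx : 0 ≤ x) : 2*x/(2+x) ≤ Real.log (1+x) := by
  set f : ℝ → ℝ := fun y => Real.log (1+y) - 2*y/(2+y) with hf
  have hder : ∀ y : ℝ, 0 < y → HasDerivAt f (1/(1+y) - (2*1*(2+y) - 2*y*1)/(2+y)^2) y := by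
    intro y hy
    have h1 : HasDerivAt (fun z : ℝ => Real.log (1+z)) (1/(1+y)) y := by
      have := ((hasDerivAt_id y).const_add (1:ℝ)).log
        (by simp only [id_eq]; positivity)
      simpa using this
    have h2 : HasDerivAt (fun z : ℝ => 2*z/(2+z)) ((2*1*(2+y) - 2*y*1)/(2+y)^2) y := by
      have := ((hasDerivAt_id y).const_mul 2).div ((hasDerivAt_id y).const_add 2)
        (by first | positivity | (simp only [id_eq]; positivity))
      simp only [id_eq] at this
      exact this
    exact h1.sub h2
  have hmono : MonotoneOn f (Set.Ici (0:ℝ)) := by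
    apply monotoneOn_of_deriv_nonneg (convex_Ici 0)
    · apply ContinuousOn.sub
      · exact (Real.continuousOn_log.comp (by fun_prop)
          (fun y hy => by simp only [Set.mem_Ici] at hy; intro h; simp at h; linarith)).congr
          (fun y hy => rfl)
      · apply ContinuousOn.div (by fun_prop) (by fun_prop)
        intro y hy; simp only [Set.mem_Ici] at hy; positivity
    · intro y hy
      rw [interior_Ici] at hy
      exact ((hder y hy).differentiableAt).differentiableWithinAt
    · intro y hy
      rw [interior_Ici, Set.mem_Ioi] at hy
      rw [(hder y hy).deriv]
      have h1 : (0:ℝ) < 1 + y := by linarith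
      have h2 : (0:ℝ) < 2 + y := by linarith
      rw [sub_nonneg, div_le_div_iff₀ (by positivity) h1]
      nlinarith [sq_nonneg y]
  have h0 : f 0 ≤ f x := hmono (Set.self_mem_Ici) hx hx
  simp only [hf] at h0
  norm_num at h0
  linarith

/-- Padé upper bound: `log(1+x) ≤ x(x+2)/(2(x+1))` for `x ≥ 0`. -/
lemma log_high {x : ℝ} (hx : 0 ≤ x) : Real.log (1+x) ≤ x*(x+2)/(2*(x+1)) := by
  set f : ℝ → ℝ := fun y => y*(y+2)/(2*(y+1)) - Real.log (1+y) with hf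
  have hder : ∀ y : ℝ, 0 < y → HasDerivAt f
      (((1*(y+2) + y*1)*(2*(y+1)) - y*(y+2)*(2*1))/(2*(y+1))^2 - 1/(1+y)) y := by
    intro y hy
    have h1 : HasDerivAt (fun z : ℝ => Real.log (1+z)) (1/(1+y)) y := by
      have := ((hasDerivAt_id y).const_add (1:ℝ)).log
        (by simp only [id_eq]; positivity)
      simpa using this
    have h2 : HasDerivAt (fun z : ℝ => z*(z+2)/(2*(z+1)))
        (((1*(y+2) + y*1)*(2*(y+1)) - y*(y+2)*(2*1))/(2*(y+1))^2) y := by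
      have := ((hasDerivAt_id y).mul ((hasDerivAt_id y).add_const 2)).div
        (((hasDerivAt_id y).add_const 1).const_mul 2)
        (by first | positivity | (simp only [id_eq]; positivity))
      simp only [id_eq] at this
      exact this
    exact h2.sub h1
  have hmono : MonotoneOn f (Set.Ici (0:ℝ)) := by
    apply monotoneOn_of_deriv_nonneg (convex_Ici 0)
    · apply ContinuousOn.sub
      · apply ContinuousOn.div (by fun_prop) (by fun_prop)
        intro y hy; simp only [Set.mem_Ici] at hy; positivity
      · exact (Real.continuousOn_log.comp (by fun_prop)
          (fun y hy => by simp only [Set.mem_Ici] at hy; intro h; simp at h; linarith)).congr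
          (fun y hy => rfl)
    · intro y hy
      rw [interior_Ici] at hy
      exact ((hder y hy).differentiableAt).differentiableWithinAt
    · intro y hy
      rw [interior_Ici, Set.mem_Ioi] at hy
      rw [(hder y hy).deriv]
      have h1 : (0:ℝ) < 1 + y := by linarith
      rw [sub_nonneg, div_le_div_iff₀ h1 (by positivity)]
      nlinarith [sq_nonneg y]
  have h0 : f 0 ≤ f x := hmono (Set.self_mem_Ici) hx hx
  simp only [hf] at h0
  norm_num at h0
  linarith

/-- Key bounds on the critical parameter. -/
lemma crit_bounds {l : ℝ} {d : ℕ} (hd : 3 ≤ d) (hpos : 0 < l)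
    (heq : l = ((d:ℝ)^2/((d:ℝ)-1)) * Real.log ((l + d)/d)) :
    2 ≤ l ∧ l ≤ 2*(d:ℝ)/((d:ℝ)-2) := by
  have hD : (3:ℝ) ≤ (d:ℝ) := by exact_mod_cast hd
  set D := (d:ℝ) with hDdef
  have hD0 : (0:ℝ) < D := by linarith
  have hD0' : D ≠ 0 := ne_of_gt hD0
  have hD1 : D - 1 ≠ 0 := by intro h; simp only [sub_eq_zero] at h; linarith
  have harg : (l + D)/D = 1 + l/D := by field_simp; ring
  rw [harg] at heq
  set ℓ := Real.log (1 + l/D) with hldef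
  have hx : 0 ≤ l/D := by positivity
  have heq' : (D-1) * l = D^2 * ℓ := by
    rw [heq]; field_simp [hD1]
  have hden1 : (0:ℝ) < 2 + l/D := by positivity
  have hden2 : (0:ℝ) < 2*D + l := by linarith
  have hden3 : (0:ℝ) < l + D := by linarith
  -- lower bound
  have hlow := log_low hx
  have hloweq : 2*(l/D)/(2+l/D) = 2*l/(2*D+l) := by
    rw [div_eq_div_iff (ne_of_gt hden1) (ne_of_gt hden2)]
    field_simp
  rw [hloweq] at hlow
  have hlow' : 2*l ≤ ℓ * (2*D + l) := by
    rw [← hldef] at hlow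
    calc 2*l = (2*l/(2*D+l)) * (2*D+l) := by field_simp
    _ ≤ ℓ * (2*D+l) := mul_le_mul_of_nonneg_right hlow (le_of_lt hden2)
  have hA : 2*l*D^2 ≤ (D-1)*l*(2*D+l) := by
    calc 2*l*D^2 = D^2*(2*l) := by ring
    _ ≤ D^2*(ℓ*(2*D+l)) := mul_le_mul_of_nonneg_left hlow' (by positivity)
    _ = (D^2*ℓ)*(2*D+l) := by ring
    _ = ((D-1)*l)*(2*D+l) := by rw [heq']
  have hC' : (2*D)*l ≤ ((D-1)*l)*l := by nlinarith [hA]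
  have hC : 2*D ≤ (D-1)*l := le_of_mul_le_mul_right hC' hpos
  have hlower : 2 ≤ l := by
    by_contra hcon
    push_neg at hcon
    have : (D-1)*l < (D-1)*2 := by
      apply mul_lt_mul_of_pos_left hcon (by linarith)
    linarith
  refine ⟨hlower, ?_⟩
  -- upper bound
  have hhigh := log_high hx
  have hhigheq : (l/D)*(l/D+2)/(2*(l/D+1)) = l*(l+2*D)/(2*D*(l+D)) := by
    rw [div_eq_div_iff (by positivity) (by positivity)]
    field_simp
  rw [hhigheq] at hhigh
  have hhigh' : ℓ * (2*D*(l+D)) ≤ l*(l+2*D) := by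
    rw [← hldef] at hhigh
    calc ℓ * (2*D*(l+D)) ≤ (l*(l+2*D)/(2*D*(l+D))) * (2*D*(l+D)) :=
          mul_le_mul_of_nonneg_right hhigh (by positivity)
    _ = l*(l+2*D) := by field_simp
  have hB : 2*(l+D)*((D-1)*l) ≤ D*(l*(l+2*D)) := by
    calc 2*(l+D)*((D-1)*l) = 2*(l+D)*(D^2*ℓ) := by rw [heq']
    _ = (ℓ*(2*D*(l+D))) * D := by ring
    _ ≤ (l*(l+2*D)) * D := mul_le_mul_of_nonneg_right hhigh' (le_of_lt hD0)
    _ = D*(l*(l+2*D)) := by ring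
  have hC2' : (2*(l+D)*(D-1))*l ≤ (D*(l+2*D))*l := by nlinarith [hB]
  have hC2 : 2*(l+D)*(D-1) ≤ D*(l+2*D) := le_of_mul_le_mul_right hC2' hpos
  rw [le_div_iff₀ (by linarith : (0:ℝ) < D - 2)]
  nlinarith [hC2]

/-- The critical values `λ_d`, the unique positive roots of
`λ = (d²/(d-1)) ln((λ+d)/d)`, converge to `2` as `d → ∞`. -/
theorem critical_parameter_limit (L : ℕ → ℝ)
    (hL : ∀ d : ℕ, 2 ≤ d → 0 < L d ∧
      L d = ((d:ℝ)^2/((d:ℝ)-1)) * Real.log ((L d + d)/d)) :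
    Filter.Tendsto L atTop (nhds 2) := by
  have ht : Tendsto (fun d : ℕ => 2*(d:ℝ)/((d:ℝ)-2)) atTop (nhds 2) := by
    have h1 : Tendsto (fun d : ℕ => (d:ℝ) - 2) atTop atTop :=
      tendsto_atTop_add_const_right _ _ tendsto_natCast_atTop_atTop
    have h2 : Tendsto (fun d : ℕ => ((d:ℝ) - 2)⁻¹) atTop (nhds 0) :=
      h1.inv_tendsto_atTop
    have h3 : Tendsto (fun d : ℕ => 2 + 4 * ((d:ℝ)-2)⁻¹) atTop (nhds (2 + 4*0)) :=
      tendsto_const_nhds.add (h2.const_mul 4)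
    norm_num at h3
    apply h3.congr'
    filter_upwards [eventually_ge_atTop 3] with d hd
    have hD : (3:ℝ) ≤ (d:ℝ) := by exact_mod_cast hd
    have h4 : (d:ℝ) - 2 ≠ 0 := by intro h; simp only [sub_eq_zero] at h; linarith
    field_simp
    ring
  refine tendsto_of_tendsto_of_tendsto_of_le_of_le' tendsto_const_nhds ht ?_ ?_
  · filter_upwards [eventually_ge_atTop 3] with d hd
    exact (crit_bounds hd (hL d (by omega)).1 (hL d (by omega)).2).1
  · filter_upwards [eventually_ge_atTop 3] with d hd
    exact (crit_bounds hd (hL d (by omega)).1 (hL d (by omega)).2).2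
end

section
/- For λ > 2, the equation ln(1 + λ(1−s)) = λ·s·(1−s) has a solution s ∈ [0,1), and the smallest nonnegative solution is strictly less than 1; for 0 < λ ≤ 2, s = 1 is the smallest solution in [0,1]. -/
open Real

lemma aux_log_gt (x : ℝ) (hx : 0 < x) : x - x^2/2 < Real.log (1+x) := by
  have key : StrictMonoOn (fun t : ℝ => Real.log (1+t) - (t - t^2/2)) (Set.Ici 0) := by
    apply strictMonoOn_of_deriv_pos (convex_Ici 0)
    · apply ContinuousOn.sub
      · apply ContinuousOn.log (by fun_prop)
        intro t ht
        simp only [Set.mem_Ici] at ht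
        positivity
      · fun_prop
    · intro t ht
      rw [interior_Ici] at ht
      simp only [Set.mem_Ioi] at ht
      have h1 : HasDerivAt (fun s : ℝ => 1 + s) 1 t := by
        simpa using (hasDerivAt_id t).const_add 1
      have h2 : HasDerivAt (fun s : ℝ => Real.log (1+s)) (1/(1+t)) t :=
        h1.log (by positivity)
      have h3 : HasDerivAt (fun s : ℝ => s - s^2/2) (1 - 2*t^1/2) t :=
        (hasDerivAt_id t).sub ((hasDerivAt_pow 2 t).div_const 2)
      have h4 : deriv (fun t : ℝ => Real.log (1+t) - (t - t^2/2)) t = _ := (h2.sub h3).deriv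
      rw [h4]
      have : 1/(1+t) - (1 - 2*t^1/2) = t^2/(1+t) := by
        field_simp; ring
      rw [this]; positivity
  have h := key (Set.mem_Ici.mpr le_rfl) (Set.mem_Ici.mpr hx.le) hx
  simp only [Real.log_one, add_zero] at h
  norm_num at h
  linarith

lemma aux_log_lt (x : ℝ) (hx : 0 < x) : Real.log (1+x) < x - x^2/2 + x^3/3 := by
  have key : StrictMonoOn (fun t : ℝ => (t - t^2/2 + t^3/3) - Real.log (1+t)) (Set.Ici 0) := by
    apply strictMonoOn_of_deriv_pos (convex_Ici 0)
    · apply ContinuousOn.sub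
      · fun_prop
      · apply ContinuousOn.log (by fun_prop)
        intro t ht
        simp only [Set.mem_Ici] at ht
        positivity
    · intro t ht
      rw [interior_Ici] at ht
      simp only [Set.mem_Ioi] at ht
      have h1 : HasDerivAt (fun s : ℝ => 1 + s) 1 t := by
        simpa using (hasDerivAt_id t).const_add 1
      have h2 : HasDerivAt (fun s : ℝ => Real.log (1+s)) (1/(1+t)) t :=
        h1.log (by positivity)
      have h3 : HasDerivAt (fun s : ℝ => s - s^2/2 + s^3/3)
          (1 - 2*t^1/2 + 3*t^2/3) t :=
        (((hasDerivAt_id t).sub ((hasDerivAt_pow 2 t).div_const 2)).add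
          ((hasDerivAt_pow 3 t).div_const 3))
      have h4 : deriv (fun t : ℝ => (t - t^2/2 + t^3/3) - Real.log (1+t)) t = _ := (h3.sub h2).deriv
      rw [h4]
      have : (1 - 2*t^1/2 + 3*t^2/3) - 1/(1+t) = t^3/(1+t) := by
        field_simp; ring
      rw [this]; positivity
  have h := key (Set.mem_Ici.mpr le_rfl) (Set.mem_Ici.mpr hx.le) hx
  simp only [Real.log_one, add_zero] at h
  norm_num at h
  linarith

/-- Extinction probability equation for `C_*(λ)`. For `λ > 2` the equation
`ln(1+λ(1-s)) = λ s (1-s)` has a smallest nonnegative solution, which lies in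
`[0,1)`; for `0 < λ ≤ 2`, `s = 1` is the smallest solution in `[0,1]`. -/
theorem extinction_probability_no_restriction (l : ℝ) (hl : 0 < l) :
    (2 < l → ∃ s : ℝ, s ∈ Set.Ico (0:ℝ) 1 ∧
      IsLeast {t : ℝ | 0 ≤ t ∧ Real.log (1 + l*(1-t)) = l*t*(1-t)} s) ∧
    (l ≤ 2 → IsLeast {t : ℝ | t ∈ Set.Icc (0:ℝ) 1 ∧
      Real.log (1 + l*(1-t)) = l*t*(1-t)} 1) := by
  constructor
  · intro hl2
    set g : ℝ → ℝ := fun t => Real.log (1 + l*(1-t)) - l*t*(1-t) with hg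
    set u : ℝ := min (1/2) (3*(l-2)/(4*l^2)) with hu
    have hupos : 0 < u := lt_min (by norm_num)
      (div_pos (by nlinarith) (by positivity))
    have huhalf : u ≤ 1/2 := min_le_left _ _
    have hub : u ≤ 3*(l-2)/(4*l^2) := min_le_right _ _
    set r : ℝ := 1 - u with hr
    have hr1 : r < 1 := by simp [hr]; linarith
    have hr0 : 0 < r := by simp [hr]; linarith
    -- continuity of g on [0, r]
    have hcont : ContinuousOn g (Set.Icc 0 r) := by
      apply ContinuousOn.sub
      · apply ContinuousOn.log (by fun_prop)
        intro t ht
        have ht1 : t ≤ r := ht.2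
        have : 0 < 1 + l*(1-t) := by nlinarith
        positivity
      · fun_prop
    have hg0 : 0 < g 0 := by
      simp only [hg]
      simp
      have : 0 < Real.log (1 + l) := Real.log_pos (by linarith)
      linarith
    have hgr : g r < 0 := by
      have hlu : 0 < l * u := by positivity
      have hb := aux_log_lt (l*u) hlu
      have harg : 1 + l*(1-r) = 1 + l*u := by rw [hr]; ring
      simp only [hg]
      rw [harg]
      have : l*r*(1-r) = l*(1-u)*u := by rw [hr]; ring
      rw [this]
      -- log(1+lu) < lu - (lu)^2/2 + (lu)^3/3 ≤ l(1-u)u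
      have h4 : (0:ℝ) < 4*l^2 := by positivity
      have hub' : u * (4*l^2) ≤ 3*(l-2) := (le_div_iff₀ h4).mp hub
      have hint := mul_le_mul_of_nonneg_left hub' (by positivity : (0:ℝ) ≤ l*u^2)
      nlinarith [hint, mul_pos hl (mul_pos hupos hupos), hb]
    -- IVT root c ∈ [0, r]
    have hivt := intermediate_value_Icc' hr0.le hcont
    have h0mem : (0:ℝ) ∈ Set.Icc (g r) (g 0) := ⟨hgr.le, hg0.le⟩
    obtain ⟨c, hc, hgc⟩ := hivt h0mem
    -- least element of T
    set T : Set ℝ := Set.Icc 0 r ∩ g ⁻¹' {0} with hT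
    have hTclosed : IsClosed T :=
      hcont.preimage_isClosed_of_isClosed isClosed_Icc isClosed_singleton
    have hTcompact : IsCompact T :=
      isCompact_Icc.of_isClosed_subset hTclosed Set.inter_subset_left
    have hTne : T.Nonempty := ⟨c, hc, hgc⟩
    obtain ⟨m, hmT, hmlb⟩ := hTcompact.exists_isLeast hTne
    obtain ⟨⟨hm0, hmr⟩, hmg⟩ := hmT
    have hmg' : Real.log (1 + l*(1-m)) = l*m*(1-m) := by
      have := Set.mem_singleton_iff.mp hmg
      simp only [hg] at this
      linarith [sub_eq_zero.mp this]
    refine ⟨m, ⟨hm0, lt_of_le_of_lt hmr hr1⟩, ⟨hm0, hmg'⟩, ?_⟩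
    intro t ⟨ht0, hteq⟩
    by_cases htr : t ≤ r
    · exact hmlb ⟨⟨ht0, htr⟩, Set.mem_singleton_iff.mpr (by simp [hg]; linarith)⟩
    · push_neg at htr
      linarith
  · intro hl2
    constructor
    · refine ⟨⟨zero_le_one, le_rfl⟩, ?_⟩
      norm_num
    · intro t ht
      obtain ⟨⟨ht0, ht1⟩, hteq⟩ := ht
      by_contra h
      push_neg at h
      have hx : 0 < l*(1-t) := by nlinarith
      have hA := aux_log_gt (l*(1-t)) hx
      rw [hteq] at hA
      nlinarith [sq_nonneg (1-t), mul_pos hl hx]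
end
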